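/- Let α : ℝ → ℝ be C¹ with η := sup_{r∈[−1/2,1/2]} |α′(r)|, and set γ(r) := (0, α(r), r) ∈ ℝ³. There exists a universal constant C such that for every ε ∈ (0,1] and every r ∈ [−1/2,1/2], |∫_{−1/2}^{1/2} [ k̄₂^ε(γ(r) − γ(r′)) − α′(r′) k̄₃^ε(γ(r) − γ(r′)) ] dr′| ≤ C η ε⁻¹, where k̄ᵢ^ε(x) = xᵢ/(4π(|x|²+ε²)^{3/2}). -/

import Mathlib

open MeasureTheory Real

noncomputable section

/-- The vector `(a,b,c) ∈ ℝ³`. -/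
def v3 (a b c : ℝ) : EuclideanSpace ℝ (Fin 3) :=
  (WithLp.equiv 2 (Fin 3 → ℝ)).symm ![a, b, c]

/-- The filament curve `γ(r) = (0, α(r), r)`. -/
def gam (α : ℝ → ℝ) (r : ℝ) : EuclideanSpace ℝ (Fin 3) := v3 0 (α r) r

/-- Components of the regularized Biot–Savart kernel:
`k̄ᵢ^ε(x) = xᵢ/(4π(|x|²+ε²)^{3/2})`. -/
def keps (ε : ℝ) (i : Fin 3) (x : EuclideanSpace ℝ (Fin 3)) : ℝ :=
  x i / (4 * π * (‖x‖ ^ 2 + ε ^ 2) ^ ((3 : ℝ) / 2))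

lemma gam_sub_one (α : ℝ → ℝ) (r r' : ℝ) : (gam α r - gam α r') 1 = α r - α r' := by
  simp [gam, v3, PiLp.sub_apply, PiLp.toLp_apply]

lemma gam_sub_two (α : ℝ → ℝ) (r r' : ℝ) : (gam α r - gam α r') 2 = r - r' := by
  simp [gam, v3, PiLp.sub_apply, PiLp.toLp_apply]

lemma gam_norm_sq (α : ℝ → ℝ) (r r' : ℝ) :
    ‖gam α r - gam α r'‖ ^ 2 = (α r - α r') ^ 2 + (r - r') ^ 2 := by
  rw [EuclideanSpace.norm_eq, Real.sq_sqrt (by positivity)]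
  rw [Fin.sum_univ_three]
  have h0 : (gam α r - gam α r') 0 = 0 := by
    simp [gam, v3, PiLp.sub_apply, PiLp.toLp_apply]
  rw [gam_sub_one, gam_sub_two, h0]
  simp

lemma int_inv_bound (ε r : ℝ) (hε : 0 < ε) :
    ∫ x in Set.Icc (-(1/2) : ℝ) (1/2), ((x - r)^2 + ε^2)⁻¹ ≤ π / ε := by
  have hcont : Continuous (fun x : ℝ => ((x - r)^2 + ε^2)⁻¹) :=
    Continuous.inv₀ (by continuity) (fun x => by positivity)
  have hF : ∀ x : ℝ, HasDerivAt (fun x => ε⁻¹ * arctan ((x - r)/ε))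
      (((x - r)^2 + ε^2)⁻¹) x := by
    intro x
    have h1 : HasDerivAt (fun x : ℝ => (x - r)/ε) (1/ε) x :=
      ((hasDerivAt_id x).sub_const r).div_const ε
    have h2 := (Real.hasDerivAt_arctan ((x - r)/ε)).comp x h1
    have h3 := h2.const_mul ε⁻¹
    refine h3.congr_deriv ?_
    field_simp
    ring
  have heq : ∫ x in Set.Icc (-(1/2) : ℝ) (1/2), ((x - r)^2 + ε^2)⁻¹
      = ε⁻¹ * arctan ((1/2 - r)/ε) - ε⁻¹ * arctan ((-(1/2) - r)/ε) := by
    rw [MeasureTheory.integral_Icc_eq_integral_Ioc,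
      ← intervalIntegral.integral_of_le (by norm_num : (-(1/2):ℝ) ≤ 1/2)]
    exact intervalIntegral.integral_eq_sub_of_hasDerivAt (fun x _ => hF x)
      (hcont.intervalIntegrable _ _)
  rw [heq]
  have h1 := Real.arctan_lt_pi_div_two ((1/2 - r)/ε)
  have h2 := Real.neg_pi_div_two_lt_arctan ((-(1/2) - r)/ε)
  have : arctan ((1/2 - r)/ε) - arctan ((-(1/2) - r)/ε) ≤ π := by linarith
  calc ε⁻¹ * arctan ((1/2 - r)/ε) - ε⁻¹ * arctan ((-(1/2) - r)/ε)
      = ε⁻¹ * (arctan ((1/2 - r)/ε) - arctan ((-(1/2) - r)/ε)) := by ring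
    _ ≤ ε⁻¹ * π := mul_le_mul_of_nonneg_left this (le_of_lt (inv_pos.mpr hε))
    _ = π / ε := by rw [div_eq_inv_mul, mul_comm]

lemma pt_bound (ε t A b η : ℝ) (hε : 0 < ε) (hA : |A| ≤ η * |t|) (hb : |b| ≤ η) :
    |A / (4*π*((A^2+t^2)+ε^2)^((3:ℝ)/2)) - b * (t / (4*π*((A^2+t^2)+ε^2)^((3:ℝ)/2)))|
      ≤ η / (2*π) * (t^2+ε^2)⁻¹ := by
  have hπ := Real.pi_pos
  have hη : 0 ≤ η := le_trans (abs_nonneg b) hb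
  set E : ℝ := t^2 + ε^2 with hEdef
  have hEpos : 0 < E := by positivity
  set D : ℝ := ((A^2+t^2)+ε^2)^((3:ℝ)/2) with hDdef
  have hD : 0 < D := Real.rpow_pos_of_pos (by positivity) _
  have h4 : 0 < 4*π*D := by positivity
  have h1 : |t| ≤ E ^ ((1:ℝ)/2) := by
    rw [← Real.sqrt_eq_rpow, ← Real.sqrt_sq_eq_abs]
    exact Real.sqrt_le_sqrt (by nlinarith)
  have hsplit : E ^ ((3:ℝ)/2) = E ^ (1:ℝ) * E ^ ((1:ℝ)/2) := by
    rw [← Real.rpow_add hEpos]; norm_num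
  have hkey : |t| * E ≤ E ^ ((3:ℝ)/2) := by
    rw [hsplit, Real.rpow_one, mul_comm]
    exact mul_le_mul_of_nonneg_left h1 hEpos.le
  have hmono : E ^ ((3:ℝ)/2) ≤ D := by
    apply Real.rpow_le_rpow hEpos.le (by nlinarith) (by norm_num)
  have htD : |t| / D ≤ E⁻¹ := by
    rw [inv_eq_one_div, div_le_div_iff₀ hD hEpos, one_mul]
    exact le_trans hkey hmono
  have step1 : |A / (4*π*D) - b * (t / (4*π*D))| ≤ |A| / (4*π*D) + |b| * (|t| / (4*π*D)) := by
    calc |A / (4*π*D) - b * (t / (4*π*D))|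
        ≤ |A / (4*π*D)| + |b * (t / (4*π*D))| := abs_sub _ _
      _ = |A| / (4*π*D) + |b| * (|t| / (4*π*D)) := by
          simp [abs_div, abs_mul, abs_of_pos hπ, abs_of_pos hD]
  have step2 : |A| / (4*π*D) ≤ (η/(4*π)) * E⁻¹ := by
    calc |A| / (4*π*D) ≤ (η * |t|) / (4*π*D) := by
          gcongr
      _ = (η/(4*π)) * (|t| / D) := by ring
      _ ≤ (η/(4*π)) * E⁻¹ := mul_le_mul_of_nonneg_left htD (by positivity)
  have step3 : |b| * (|t| / (4*π*D)) ≤ (η/(4*π)) * E⁻¹ := by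
    calc |b| * (|t| / (4*π*D)) ≤ η * (|t| / (4*π*D)) := by
          gcongr
      _ = (η/(4*π)) * (|t| / D) := by ring
      _ ≤ (η/(4*π)) * E⁻¹ := mul_le_mul_of_nonneg_left htD (by positivity)
  have : η / (2*π) * E⁻¹ = (η/(4*π)) * E⁻¹ + (η/(4*π)) * E⁻¹ := by ring
  linarith

/-- There is a universal constant `C` such that, whenever `|α′| ≤ η` on `[−1/2,1/2]`,
the first component of the self-induced velocity of the filament `γ(r) = (0,α(r),r)`
satisfies `|∫ [k̄₂^ε − α′ k̄₃^ε](γ(r)−γ(r′)) dr′| ≤ C η ε⁻¹` for all `ε ∈ (0,1]` and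
`r ∈ [−1/2,1/2]`. -/
theorem filament_first_velocity_component_estimate :
    ∃ C : ℝ, 0 < C ∧ ∀ (α : ℝ → ℝ), ContDiff ℝ 1 α →
      ∀ η : ℝ, (∀ r ∈ Set.Icc (-(1/2) : ℝ) (1/2), |deriv α r| ≤ η) →
      ∀ ε : ℝ, ε ∈ Set.Ioc (0 : ℝ) 1 →
      ∀ r ∈ Set.Icc (-(1/2) : ℝ) (1/2),
        |∫ r' in Set.Icc (-(1/2) : ℝ) (1/2),
            (keps ε 1 (gam α r - gam α r') - deriv α r' * keps ε 2 (gam α r - gam α r'))|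
          ≤ C * η / ε := by
  refine ⟨1, one_pos, fun α hα η hη ε hε r hr => ?_⟩
  have hπ := Real.pi_pos
  have hεpos : 0 < ε := hε.1
  have hη0 : 0 ≤ η := le_trans (abs_nonneg _) (hη r hr)
  set I : Set ℝ := Set.Icc (-(1/2) : ℝ) (1/2) with hI
  -- the explicit integrand and its majorant
  set f : ℝ → ℝ := fun r' =>
    (α r - α r') / (4*π*(((α r - α r')^2+(r-r')^2)+ε^2)^((3:ℝ)/2))
      - deriv α r' * ((r-r') / (4*π*(((α r - α r')^2+(r-r')^2)+ε^2)^((3:ℝ)/2))) with hf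
  set g : ℝ → ℝ := fun r' => η / (2*π) * (((r'-r)^2+ε^2)⁻¹) with hg
  have hfeq : ∀ r', keps ε 1 (gam α r - gam α r')
      - deriv α r' * keps ε 2 (gam α r - gam α r') = f r' := by
    intro r'
    simp only [keps, gam_norm_sq, gam_sub_one, gam_sub_two, hf]
  -- continuity of f
  have hden_pos : ∀ x : ℝ, 0 < 4*π*(((α r - α x)^2+(r-x)^2)+ε^2)^((3:ℝ)/2) := by
    intro x
    have : (0:ℝ) < ((α r - α x)^2+(r-x)^2)+ε^2 := by positivity
    have := Real.rpow_pos_of_pos this ((3:ℝ)/2)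
    positivity
  have hden_cont : Continuous (fun x : ℝ => 4*π*(((α r - α x)^2+(r-x)^2)+ε^2)^((3:ℝ)/2)) := by
    apply continuous_const.mul
    apply Continuous.rpow_const
    · have := hα.continuous
      continuity
    · exact fun x => Or.inr (by norm_num)
  have hf_cont : Continuous f := by
    apply Continuous.sub
    · exact (continuous_const.sub hα.continuous).div hden_cont fun x => (hden_pos x).ne'
    · exact (hα.continuous_deriv le_rfl).mul
        ((continuous_const.sub continuous_id).div hden_cont fun x => (hden_pos x).ne')
  have hg_cont : Continuous g := by
    apply continuous_const.mul
    apply Continuous.inv₀ (by continuity) (fun x => by positivity)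
  -- pointwise bound on I
  have hpt : ∀ r' ∈ I, |f r'| ≤ g r' := by
    intro r' hr'
    have hA : |α r - α r'| ≤ η * |r - r'| := by
      have := Convex.norm_image_sub_le_of_norm_deriv_le (s := I)
        (fun x _ => hα.differentiable one_ne_zero x)
        (fun x hx => by rw [Real.norm_eq_abs]; exact hη x hx) (convex_Icc _ _) hr' hr
      simpa [Real.norm_eq_abs] using this
    have := pt_bound ε (r - r') (α r - α r') (deriv α r') η hεpos hA (hη r' hr')
    have hsq : (r - r')^2 = (r' - r)^2 := by ring
    nth_rewrite 3 [hsq] at this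
    exact this
  -- integral comparison
  have h1 : |∫ r' in I, f r'| ≤ ∫ r' in I, |f r'| := by
    simpa [Real.norm_eq_abs] using
      MeasureTheory.norm_integral_le_integral_norm (μ := volume.restrict I) f
  have h2 : ∫ r' in I, |f r'| ≤ ∫ r' in I, g r' := by
    apply MeasureTheory.setIntegral_mono_on
    · exact (hf_cont.abs.integrableOn_Icc)
    · exact (hg_cont.integrableOn_Icc)
    · exact measurableSet_Icc
    · exact hpt
  have h3 : ∫ r' in I, g r' ≤ η / (2*π) * (π / ε) := by
    rw [hg]
    rw [MeasureTheory.integral_const_mul]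
    apply mul_le_mul_of_nonneg_left _ (by positivity)
    exact int_inv_bound ε r hεpos
  have h4 : η / (2*π) * (π / ε) = η / (2*ε) := by
    field_simp
  have h5 : η / (2*ε) ≤ 1 * η / ε := by
    rw [one_mul]
    apply div_le_div_of_nonneg_left hη0 hεpos -- maybe wrong name
    linarith
  calc |∫ r' in I, (keps ε 1 (gam α r - gam α r')
        - deriv α r' * keps ε 2 (gam α r - gam α r'))|
      = |∫ r' in I, f r'| := by simp only [hfeq]
    _ ≤ ∫ r' in I, |f r'| := h1
    _ ≤ ∫ r' in I, g r' := h2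
    _ ≤ η / (2*π) * (π / ε) := h3
    _ = η / (2*ε) := h4
    _ ≤ 1 * η / ε := h5
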